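/- Let α ∈ (0, 1/2) be irrational and M(α) := {m + nα | m, n ∈ ℤ, 0 ≤ m + nα ≤ 1}, an MV-subalgebra of the standard MV-algebra [0,1]. Then M(α) admits no square root; in particular (α+1)/2 ∉ M(α). -/

import Mathlib

class MVAlg (M : Type*) where
  add : M → M → M
  compl : M → M
  zero : M
  one : M
  add_comm : ∀ x y, add x y = add y x
  add_assoc : ∀ x y z, add (add x y) z = add x (add y z)
  add_zero : ∀ x, add x zero = x
  compl_compl : ∀ x, compl (compl x) = x
  add_one : ∀ x, add x one = one
  chang : ∀ x y, add x (compl (add x (compl y))) = add y (compl (add y (compl x)))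
  compl_zero : compl zero = one

namespace MVAlg

variable {M : Type*} [MVAlg M]

/-- x ⊙ y := (x' ⊕ y')' -/
def odot (x y : M) : M := compl (add (compl x) (compl y))

/-- x ≤ y iff x' ⊕ y = 1 -/
def le (x y : M) : Prop := add (compl x) y = one

/-- x ∧ y := x ⊙ (x' ⊕ y) -/
def inf (x y : M) : M := odot x (add (compl x) y)

/-- x ∨ y := (x ⊙ y') ⊕ y -/
def sup (x y : M) : M := add (odot x (compl y)) y

/-- x ⊖ y := x ⊙ y' -/
def sub (x y : M) : M := odot x (compl y)

/-- A square root on an MV-algebra. -/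
def IsSquareRoot (s : M → M) : Prop :=
  (∀ x : M, odot (s x) (s x) = x) ∧ ∀ x y : M, le (odot y y) x → le y (s x)

end MVAlg

theorem M_alpha_no_square_root (α : ℝ) (hirr : Irrational α) (h0 : 0 < α)
    (h2 : α < 1 / 2) :
    (¬ ∃ s : ℝ → ℝ,
        (∀ x ∈ {x : ℝ | ∃ m n : ℤ, x = m + n * α ∧ 0 ≤ x ∧ x ≤ 1},
            s x ∈ {x : ℝ | ∃ m n : ℤ, x = m + n * α ∧ 0 ≤ x ∧ x ≤ 1}) ∧
        (∀ x ∈ {x : ℝ | ∃ m n : ℤ, x = m + n * α ∧ 0 ≤ x ∧ x ≤ 1},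
            max (s x + s x - 1) 0 = x) ∧
        (∀ x ∈ {x : ℝ | ∃ m n : ℤ, x = m + n * α ∧ 0 ≤ x ∧ x ≤ 1},
          ∀ y ∈ {x : ℝ | ∃ m n : ℤ, x = m + n * α ∧ 0 ≤ x ∧ x ≤ 1},
            max (y + y - 1) 0 ≤ x → y ≤ s x)) ∧
    (α + 1) / 2 ∉ {x : ℝ | ∃ m n : ℤ, x = m + n * α ∧ 0 ≤ x ∧ x ≤ 1} := by
  have hmem : (α + 1) / 2 ∉ {x : ℝ | ∃ m n : ℤ, x = m + n * α ∧ 0 ≤ x ∧ x ≤ 1} := by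
    rintro ⟨m, n, heq, -, -⟩
    have hn : (1 : ℤ) - 2 * n ≠ 0 := by omega
    apply hirr
    refine ⟨(2 * m - 1) / (1 - 2 * n), ?_⟩
    have hn' : ((1 : ℚ) - 2 * n) ≠ 0 := by exact_mod_cast hn
    push_cast
    rw [div_eq_iff (by intro h; apply hn; exact_mod_cast (show ((1 - 2 * n : ℤ) : ℝ) = 0 by push_cast; linarith))]
    linarith
  refine ⟨?_, hmem⟩
  rintro ⟨s, hS, hsq, -⟩
  have hαM : α ∈ {x : ℝ | ∃ m n : ℤ, x = m + n * α ∧ 0 ≤ x ∧ x ≤ 1} :=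
    ⟨0, 1, by push_cast; ring, le_of_lt h0, by linarith⟩
  have h1 := hsq α hαM
  have h2' := hS α hαM
  have hsα : s α = (α + 1) / 2 := by
    rcases le_or_gt (s α + s α - 1) 0 with h | h
    · rw [max_eq_right h] at h1; linarith
    · rw [max_eq_left (le_of_lt h)] at h1; linarith
  exact hmem (hsα ▸ h2')
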